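/- Let f : ℝ → ℝ be differentiable and fix (q₀,p₀,s₀) ∈ ℝ³. The curve γ(t) = (q(t),p(t),s(t)) with q(t) = q₀, p(t) = e^{−t f(q₀)}(p₀ − f′(q₀)s₀ t), s(t) = e^{−t f(q₀)} s₀ satisfies, for all t ∈ ℝ, the differential equations q̇ = 0, ṗ = −(p f(q) + s f′(q)), ṡ = −s f(q). In other words, the exponential map in the splitting integrator is the exact time-t flow of the vector field X_A = −(p f(q) + s f′(q))∂/∂p − s f(q)∂/∂s arising from the Hamiltonian term A = f(q)s. -/

import Mathlib

/-- the curve q(t) = q₀, p(t) = e^{−t f(q₀)}(p₀ − f′(q₀)s₀ t),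
s(t) = e^{−t f(q₀)} s₀ is the exact flow of the vector field
X_A = −(p f(q) + s f′(q)) ∂/∂p − s f(q) ∂/∂s arising from the Hamiltonian term A = f(q)s. -/
theorem lienard_splitting_flow_A
    (f : ℝ → ℝ) (hf : Differentiable ℝ f)
    (q0 p0 s0 : ℝ)
    (q p s : ℝ → ℝ)
    (hq : ∀ t : ℝ, q t = q0)
    (hp : ∀ t : ℝ, p t = Real.exp (-t * f q0) * (p0 - deriv f q0 * s0 * t))
    (hs : ∀ t : ℝ, s t = Real.exp (-t * f q0) * s0) :
    ∀ t : ℝ,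
      deriv q t = 0 ∧
      deriv p t = -(p t * f (q t) + s t * deriv f (q t)) ∧
      deriv s t = - s t * f (q t) := by
  have hq' : q = fun _ => q0 := funext hq
  have hp' : p = fun t => Real.exp (-t * f q0) * (p0 - deriv f q0 * s0 * t) := funext hp
  have hs' : s = fun t => Real.exp (-t * f q0) * s0 := funext hs
  subst hq' hp' hs'
  intro t
  have hexp : HasDerivAt (fun t : ℝ => Real.exp (-t * f q0)) (-f q0 * Real.exp (-t * f q0)) t := by
    have h1 : HasDerivAt (fun t : ℝ => -t * f q0) (-f q0) t := by
      simpa using ((hasDerivAt_id t).neg.mul_const (f q0))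
    simpa [mul_comm] using h1.exp
  refine ⟨by simp, ?_, ?_⟩
  · have hlin : HasDerivAt (fun t : ℝ => p0 - deriv f q0 * s0 * t) (-(deriv f q0 * s0)) t := by
      exact ((hasDerivAt_const t p0).sub ((hasDerivAt_id t).const_mul (deriv f q0 * s0))).congr_deriv (by ring)
    have := hexp.mul hlin
    rw [HasDerivAt.deriv (f := fun t => Real.exp (-t * f q0) * (p0 - deriv f q0 * s0 * t)) this]
    ring
  · have := hexp.mul_const s0
    rw [this.deriv]
    ring
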